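/- Let L be a free ℤ-module of finite rank n, and A, B ⊆ L primitive sublattices (i.e., L/A and L/B are torsion-free). Let exp_L : L ⊗ ℂ → L ⊗ ℂ* be the map 1_L ⊗ (t ↦ e^{2πit}). If (A ⊗ ℂ) ∩ (B ⊗ ℂ) = 0 inside L ⊗ ℂ, then there is a group isomorphism Tors(L/(A+B)) ≅ exp_L(A ⊗ ℂ) ∩ exp_L(B ⊗ ℂ). -/

import Mathlib

open Complex

/-- The exponential `t ↦ e^{2πit}` as a unit of `ℂ`. -/
noncomputable def expu (t : ℂ) : ℂˣ :=
  Units.mk0 (Complex.exp (2 * Real.pi * Complex.I * t)) (Complex.exp_ne_zero _)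

/-- The coordinatewise exponential `exp_L : ℂⁿ → (ℂ*)ⁿ` as a group homomorphism. -/
noncomputable def expL (n : ℕ) : Multiplicative (Fin n → ℂ) →* (Fin n → ℂˣ) where
  toFun t i := expu (Multiplicative.toAdd t i)
  map_one' := by
    funext i
    apply Units.ext
    simp [expu]
  map_mul' a b := by
    funext i
    apply Units.ext
    simp [expu, mul_add, Complex.exp_add]

/-- Inclusion of the lattice `ℤⁿ` into `ℂⁿ`. -/
def zc {n : ℕ} (v : Fin n → ℤ) : Fin n → ℂ := fun i => (v i : ℂ)

/-- The complexification `A ⊗ ℂ` of a sublattice `A ⊆ ℤⁿ`, as the ℂ-span of `A` in `ℂⁿ`. -/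
noncomputable def VC {n : ℕ} (A : Submodule ℤ (Fin n → ℤ)) : Submodule ℂ (Fin n → ℂ) :=
  Submodule.span ℂ (zc '' (A : Set (Fin n → ℤ)))

/-- The subtorus `exp_L(V)` of `(ℂ*)ⁿ` associated to a ℂ-subspace `V ⊆ ℂⁿ`. -/
noncomputable def expT {n : ℕ} (V : Submodule ℂ (Fin n → ℂ)) : Subgroup (Fin n → ℂˣ) :=
  Subgroup.map (expL n) (AddSubgroup.toSubgroup V.toAddSubgroup)

/-- A sublattice `A ⊆ ℤⁿ` is primitive if `ℤⁿ/A` is torsion-free. -/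
def IsPrimitive {n : ℕ} (A : Submodule ℤ (Fin n → ℤ)) : Prop :=
  ∀ (m : ℤ) (x : Fin n → ℤ), m ≠ 0 → m • x ∈ A → x ∈ A

namespace Stmt0Aux

variable {n : ℕ}

def qc {n : ℕ} (v : Fin n → ℤ) : Fin n → ℚ := fun i => (v i : ℚ)

lemma zc_add (u v : Fin n → ℤ) : zc (u + v) = zc u + zc v := by
  funext i; simp [zc]

lemma zc_sub (u v : Fin n → ℤ) : zc (u - v) = zc u - zc v := by
  funext i; simp [zc]

lemma zc_smul (m : ℤ) (v : Fin n → ℤ) : zc (m • v) = (m : ℂ) • zc v := by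
  funext i; simp [zc]

lemma qc_smul (m : ℤ) (v : Fin n → ℤ) : qc (m • v) = (m : ℚ) • qc v := by
  funext i; simp [qc]

lemma qc_inj {u v : Fin n → ℤ} (h : qc u = qc v) : u = v := by
  funext i
  have := congrFun h i
  simp only [qc] at this
  exact_mod_cast this

/-- The ℤ-linear version of `zc`. -/
def zcL (n : ℕ) : (Fin n → ℤ) →ₗ[ℤ] (Fin n → ℂ) :=
  LinearMap.pi fun i => (Int.castAddHom ℂ).toIntLinearMap.comp (LinearMap.proj i)

lemma zcL_apply (v : Fin n → ℤ) : zcL n v = zc v := rfl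

lemma zc_mem_VC {C : Submodule ℤ (Fin n → ℤ)} {x : Fin n → ℤ} (hx : x ∈ C) :
    zc x ∈ VC C := Submodule.subset_span ⟨x, hx, rfl⟩

lemma mem_qspan_of_zc_mem_VC (C : Submodule ℤ (Fin n → ℤ)) (x : Fin n → ℤ)
    (h : zc x ∈ VC C) : qc x ∈ Submodule.span ℚ (qc '' (C : Set (Fin n → ℤ))) := by
  by_contra hx
  obtain ⟨f, hfx, hfp⟩ :=
    Submodule.exists_dual_map_eq_bot_of_notMem hx inferInstance
  have hfzero : ∀ y ∈ Submodule.span ℚ (qc '' (C : Set (Fin n → ℤ))), f y = 0 := by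
    intro y hy
    have : f y ∈ Submodule.map f (Submodule.span ℚ (qc '' (C : Set (Fin n → ℤ)))) :=
      Submodule.mem_map_of_mem hy
    rw [hfp] at this
    simpa using this
  -- complexify f
  set G : (Fin n → ℂ) →ₗ[ℂ] ℂ :=
    ∑ i : Fin n, ((f (Pi.single i 1) : ℚ) : ℂ) • (LinearMap.proj i) with hG
  have hGq : ∀ y : Fin n → ℚ, G (fun i => (y i : ℂ)) = (f y : ℂ) := by
    intro y
    have h1 : f y = ∑ i : Fin n, y i * f (Pi.single i 1) := by
      conv_lhs => rw [← Finset.univ_sum_single y]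
      rw [map_sum]
      refine Finset.sum_congr rfl fun i _ => ?_
      have h2 : Pi.single i (y i) = y i • (Pi.single i 1 : Fin n → ℚ) := by
        rw [← Pi.single_smul, smul_eq_mul, mul_one]
      rw [h2, map_smul, smul_eq_mul]
    rw [h1, hG]
    simp only [LinearMap.sum_apply, LinearMap.smul_apply, LinearMap.proj_apply,
      smul_eq_mul, Rat.cast_sum, Rat.cast_mul]
    exact Finset.sum_congr rfl fun i _ => by ring
  have hGzero : ∀ v ∈ VC C, G v = 0 := by
    intro v hv
    have : VC C ≤ LinearMap.ker G := by
      rw [VC, Submodule.span_le]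
      rintro _ ⟨a, ha, rfl⟩
      rw [SetLike.mem_coe, LinearMap.mem_ker]
      have : zc a = fun i => ((qc a i : ℚ) : ℂ) := by
        funext i; simp [zc, qc]
      rw [this, hGq (qc a), hfzero (qc a) (Submodule.subset_span ⟨a, ha, rfl⟩)]
      simp
    exact LinearMap.mem_ker.mp (this hv)
  have h1 : G (zc x) = 0 := hGzero _ h
  have h2 : zc x = fun i => ((qc x i : ℚ) : ℂ) := by funext i; simp [zc, qc]
  rw [h2, hGq] at h1
  exact hfx (by exact_mod_cast h1)

lemma exists_smul_mem_of_mem_qspan (C : Submodule ℤ (Fin n → ℤ)) (x : Fin n → ℤ)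
    (h : qc x ∈ Submodule.span ℚ (qc '' (C : Set (Fin n → ℤ)))) :
    ∃ m : ℤ, m ≠ 0 ∧ m • x ∈ C := by
  have key : ∀ y ∈ Submodule.span ℚ (qc '' (C : Set (Fin n → ℤ))),
      ∃ m : ℤ, m ≠ 0 ∧ ∃ a ∈ C, (m : ℚ) • y = qc a := by
    intro y hy
    induction hy using Submodule.span_induction with
    | mem y hy =>
      obtain ⟨a, ha, rfl⟩ := hy
      exact ⟨1, one_ne_zero, a, ha, by simp⟩
    | zero => exact ⟨1, one_ne_zero, 0, zero_mem _, by funext i; simp [qc]⟩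
    | add y z _ _ ihy ihz =>
      obtain ⟨m1, hm1, a1, ha1, he1⟩ := ihy
      obtain ⟨m2, hm2, a2, ha2, he2⟩ := ihz
      refine ⟨m1 * m2, mul_ne_zero hm1 hm2, m2 • a1 + m1 • a2,
        add_mem (C.smul_mem _ ha1) (C.smul_mem _ ha2), ?_⟩
      funext i
      have h1 := congrFun he1 i
      have h2 := congrFun he2 i
      simp only [qc, Pi.smul_apply, smul_eq_mul, Pi.add_apply] at h1 h2 ⊢
      push_cast
      linear_combination (m2 : ℚ) * h1 + (m1 : ℚ) * h2
    | smul c y _ ih =>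
      obtain ⟨m, hm, a, ha, he⟩ := ih
      refine ⟨(c.den : ℤ) * m, mul_ne_zero (by exact_mod_cast c.den_ne_zero) hm,
        c.num • a, C.smul_mem _ ha, ?_⟩
      funext i
      have h1 := congrFun he i
      have hden : (c.den : ℚ) * c = c.num := by
        rw [mul_comm]
        exact_mod_cast Rat.mul_den_eq_num c
      simp only [qc, Pi.smul_apply, smul_eq_mul] at h1 ⊢
      push_cast
      linear_combination ((m : ℚ) * y i) * hden + (c.num : ℚ) * h1
  obtain ⟨m, hm, a, ha, he⟩ := key _ h
  have : qc (m • x) = qc a := by rw [qc_smul]; exact he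
  exact ⟨m, hm, qc_inj this ▸ ha⟩

lemma exists_smul_mem_of_zc_mem_VC (C : Submodule ℤ (Fin n → ℤ)) (x : Fin n → ℤ)
    (h : zc x ∈ VC C) : ∃ m : ℤ, m ≠ 0 ∧ m • x ∈ C :=
  exists_smul_mem_of_mem_qspan C x (mem_qspan_of_zc_mem_VC C x h)

lemma mem_of_zc_mem_VC {C : Submodule ℤ (Fin n → ℤ)} (hC : IsPrimitive C)
    {x : Fin n → ℤ} (h : zc x ∈ VC C) : x ∈ C := by
  obtain ⟨m, hm, hmem⟩ := exists_smul_mem_of_zc_mem_VC C x h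
  exact hC m x hm hmem

lemma VC_sup (A B : Submodule ℤ (Fin n → ℤ)) : VC (A ⊔ B) = VC A ⊔ VC B := by
  apply le_antisymm
  · rw [VC, Submodule.span_le]
    rintro _ ⟨v, hv, rfl⟩
    obtain ⟨u, hu, w, hw, rfl⟩ := Submodule.mem_sup.mp hv
    rw [SetLike.mem_coe, zc_add]
    exact add_mem (Submodule.mem_sup_left (zc_mem_VC hu))
      (Submodule.mem_sup_right (zc_mem_VC hw))
  · apply sup_le
    · exact Submodule.span_mono (Set.image_mono (by exact_mod_cast le_sup_left))
    · exact Submodule.span_mono (Set.image_mono (by exact_mod_cast le_sup_right))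

lemma two_pi_I_ne_zero : (2 * (Real.pi : ℂ) * Complex.I) ≠ 0 := by
  simp [Real.pi_ne_zero, Complex.I_ne_zero]

lemma expu_eq_one_iff (t : ℂ) : expu t = 1 ↔ ∃ k : ℤ, t = (k : ℂ) := by
  rw [Units.ext_iff]
  show Complex.exp (2 * Real.pi * Complex.I * t) = 1 ↔ _
  rw [Complex.exp_eq_one_iff]
  constructor
  · rintro ⟨k, hk⟩
    exact ⟨k, mul_left_cancel₀ two_pi_I_ne_zero (by rw [hk]; ring)⟩
  · rintro ⟨k, rfl⟩
    exact ⟨k, by ring⟩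

lemma expL_eq_one_iff (v : Fin n → ℂ) :
    expL n (Multiplicative.ofAdd v) = 1 ↔ ∃ w : Fin n → ℤ, v = zc w := by
  constructor
  · intro h
    have h1 : ∀ i, expu (v i) = 1 := by
      intro i
      have := congrFun h i
      exact this
    have h2 : ∀ i, ∃ k : ℤ, v i = (k : ℂ) := fun i => (expu_eq_one_iff _).mp (h1 i)
    exact ⟨fun i => (h2 i).choose, funext fun i => (h2 i).choose_spec⟩
  · rintro ⟨w, rfl⟩
    funext i
    exact (expu_eq_one_iff _).mpr ⟨w i, rfl⟩

lemma expL_ofAdd_add (u v : Fin n → ℂ) :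
    expL n (Multiplicative.ofAdd (u + v)) =
      expL n (Multiplicative.ofAdd u) * expL n (Multiplicative.ofAdd v) := by
  rw [← map_mul]
  rfl

lemma expL_ofAdd_neg (v : Fin n → ℂ) :
    expL n (Multiplicative.ofAdd (-v)) = (expL n (Multiplicative.ofAdd v))⁻¹ := by
  rw [← map_inv]
  rfl

lemma mem_expT {V : Submodule ℂ (Fin n → ℂ)} {u : Fin n → ℂˣ} :
    u ∈ expT V ↔ ∃ v : Fin n → ℂ, v ∈ V ∧ expL n (Multiplicative.ofAdd v) = u := by
  rw [expT, Subgroup.mem_map]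
  constructor
  · rintro ⟨t, ht, rfl⟩
    exact ⟨Multiplicative.toAdd t, ht, rfl⟩
  · rintro ⟨v, hv, h⟩
    exact ⟨Multiplicative.ofAdd v, hv, h⟩

end Stmt0Aux


open Stmt0Aux in
theorem stmt_0 (n : ℕ) (A B : Submodule ℤ (Fin n → ℤ))
    (hA : IsPrimitive A) (hB : IsPrimitive B)
    (hAB : VC A ⊓ VC B = ⊥) :
    Nonempty (Multiplicative (Submodule.torsion ℤ ((Fin n → ℤ) ⧸ (A ⊔ B))) ≃*
      (expT (VC A) ⊓ expT (VC B) : Subgroup (Fin n → ℂˣ))) := by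
  classical
  obtain ⟨W, hW⟩ := Submodule.exists_isCompl (VC A ⊔ VC B)
  have hdisj : Disjoint (VC A) (VC B ⊔ W) := by
    rw [Submodule.disjoint_def]
    intro x hxA hxBW
    obtain ⟨b, hb, w, hw, hbw⟩ := Submodule.mem_sup.mp hxBW
    have hw0 : w = 0 := by
      refine Submodule.disjoint_def.mp hW.disjoint w ?_ hw
      have hxw : w = x - b := by rw [← hbw]; ring
      rw [hxw]
      exact sub_mem (Submodule.mem_sup_left hxA) (Submodule.mem_sup_right hb)
    have hxB : x ∈ VC B := by rw [← hbw, hw0, add_zero]; exact hb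
    have hbot : x ∈ VC A ⊓ VC B := Submodule.mem_inf.mpr ⟨hxA, hxB⟩
    rw [hAB] at hbot
    simpa using hbot
  have hcompl : IsCompl (VC A) (VC B ⊔ W) :=
    ⟨hdisj, codisjoint_iff.mpr (by rw [← sup_assoc]; exact codisjoint_iff.mp hW.codisjoint)⟩
  set π := Submodule.projectionOnto (VC A) (VC B ⊔ W) hcompl with hπdef
  have hπA : ∀ v (hv : v ∈ VC A), (π v : Fin n → ℂ) = v := by
    intro v hv
    exact congrArg Subtype.val (Submodule.projectionOnto_apply_left hcompl ⟨v, hv⟩)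
  have hπB : ∀ v ∈ VC B ⊔ W, π v = 0 := fun v hv =>
    Submodule.projectionOnto_apply_of_mem_right hcompl hv
  have hsub : ∀ v ∈ VC A ⊔ VC B, v - (π v : Fin n → ℂ) ∈ VC B := by
    intro v hv
    have h1 : v - (π v : Fin n → ℂ) ∈ VC B ⊔ W := by
      rw [← Submodule.ker_projectionOnto hcompl, LinearMap.mem_ker, map_sub]
      have h2 : π ((π v : Fin n → ℂ)) = π v :=
        Submodule.projectionOnto_apply_left hcompl (π v)
      rw [h2, sub_self]
    have h2 : v - (π v : Fin n → ℂ) ∈ VC A ⊔ VC B :=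
      sub_mem hv (Submodule.mem_sup_left (π v).2)
    obtain ⟨b, hb, w, hw, hbw⟩ := Submodule.mem_sup.mp h1
    have hw0 : w = 0 := by
      refine Submodule.disjoint_def.mp hW.disjoint w ?_ hw
      have hxw : w = (v - (π v : Fin n → ℂ)) - b := by rw [← hbw]; ring
      rw [hxw]
      exact sub_mem h2 (Submodule.mem_sup_right hb)
    rw [← hbw, hw0, add_zero]
    exact hb
  set S : Submodule ℤ (Fin n → ℤ) :=
    Submodule.comap (zcL n) ((VC A ⊔ VC B).restrictScalars ℤ) with hSdef
  have hmemS : ∀ x : Fin n → ℤ, x ∈ S ↔ zc x ∈ VC A ⊔ VC B := fun x => Iff.rfl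
  set T : Subgroup (Fin n → ℂˣ) := expT (VC A) ⊓ expT (VC B) with hTdef
  set Φ : ↥S →+ Additive (Fin n → ℂˣ) := AddMonoidHom.mk'
    (fun x => Additive.ofMul
      (expL n (Multiplicative.ofAdd ((π (zc (x : Fin n → ℤ)) : Fin n → ℂ)))))
    (by
      intro a b
      simp only [Submodule.coe_add, zc_add, map_add]
      rw [expL_ofAdd_add]
      rfl) with hΦdef
  have hΦapp : ∀ x : ↥S, Φ x = Additive.ofMul
      (expL n (Multiplicative.ofAdd ((π (zc (x : Fin n → ℤ)) : Fin n → ℂ)))) := fun x => rfl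
  have hker : ∀ x : ↥S, Φ x = 0 ↔ (x : Fin n → ℤ) ∈ A ⊔ B := by
    intro x
    rw [hΦapp x, ofMul_eq_zero]
    constructor
    · intro h1
      obtain ⟨w, hw⟩ := (expL_eq_one_iff _).mp h1
      have hwA : w ∈ A := mem_of_zc_mem_VC hA (by rw [← hw]; exact (π _).2)
      have hxw : (x : Fin n → ℤ) - w ∈ B := by
        apply mem_of_zc_mem_VC hB
        rw [zc_sub, ← hw]
        exact hsub _ x.2
      have hx : (x : Fin n → ℤ) = w + ((x : Fin n → ℤ) - w) := by ring
      rw [hx]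
      exact add_mem (Submodule.mem_sup_left hwA) (Submodule.mem_sup_right hxw)
    · intro hx
      obtain ⟨u, hu, v, hv, huv⟩ := Submodule.mem_sup.mp hx
      have h1 : zc (x : Fin n → ℤ) = zc u + zc v := by rw [← huv, zc_add]
      have h2 : (π (zc (x : Fin n → ℤ)) : Fin n → ℂ) = zc u := by
        rw [h1, map_add]
        have h3 : π (zc v) = 0 := hπB _ (Submodule.mem_sup_left (zc_mem_VC hv))
        rw [h3, add_zero]
        exact hπA _ (zc_mem_VC hu)
      rw [h2]
      exact (expL_eq_one_iff _).mpr ⟨u, rfl⟩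
  have hrange : Φ.range = Subgroup.toAddSubgroup T := by
    ext u
    rw [AddMonoidHom.mem_range]
    constructor
    · rintro ⟨x, rfl⟩
      rw [hΦapp x]
      have hmem : expL n (Multiplicative.ofAdd ((π (zc (x : Fin n → ℤ)) : Fin n → ℂ))) ∈ T := by
        rw [hTdef, Subgroup.mem_inf]
        constructor
        · exact mem_expT.mpr ⟨_, (π _).2, rfl⟩
        · refine mem_expT.mpr
            ⟨(π (zc (x : Fin n → ℤ)) : Fin n → ℂ) - zc (x : Fin n → ℤ), ?_, ?_⟩
          · have h1 := neg_mem (hsub (zc (x : Fin n → ℤ)) x.2)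
            rwa [neg_sub] at h1
          · have h1 : (π (zc (x : Fin n → ℤ)) : Fin n → ℂ) =
                ((π (zc (x : Fin n → ℤ)) : Fin n → ℂ) - zc (x : Fin n → ℤ))
                  + zc (x : Fin n → ℤ) := by ring
            conv_rhs => rw [h1]
            rw [expL_ofAdd_add, (expL_eq_one_iff _).mpr ⟨(x : Fin n → ℤ), rfl⟩, mul_one]
      exact hmem
    · intro hu
      have hu' : Additive.toMul u ∈ T := hu
      rw [hTdef, Subgroup.mem_inf] at hu'
      obtain ⟨va, hva, hea⟩ := mem_expT.mp hu'.1
      obtain ⟨vb, hvb, heb⟩ := mem_expT.mp hu'.2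
      have h1 : expL n (Multiplicative.ofAdd (va - vb)) = 1 := by
        have hsplit : va - vb = va + (-vb) := by ring
        rw [hsplit, expL_ofAdd_add, expL_ofAdd_neg, hea, heb, mul_inv_cancel]
      obtain ⟨w, hw⟩ := (expL_eq_one_iff _).mp h1
      have hwS : w ∈ S := by
        rw [hmemS, ← hw]
        exact sub_mem (Submodule.mem_sup_left hva) (Submodule.mem_sup_right hvb)
      refine ⟨⟨w, hwS⟩, ?_⟩
      rw [hΦapp]
      have h2 : (π (zc w) : Fin n → ℂ) = va := by
        rw [← hw, map_sub]
        have h3 : π vb = 0 := hπB _ (Submodule.mem_sup_left hvb)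
        rw [Submodule.coe_sub, h3]
        have h4 : (π va : Fin n → ℂ) = va := hπA _ hva
        simp [h4]
      rw [h2, hea]
      rfl
  have htorsmem : ∀ x : ↥S, Submodule.Quotient.mk (p := A ⊔ B) (x : Fin n → ℤ) ∈
      Submodule.torsion ℤ ((Fin n → ℤ) ⧸ (A ⊔ B)) := by
    intro x
    obtain ⟨m, hm, hmem⟩ :=
      exists_smul_mem_of_zc_mem_VC (A ⊔ B) x (by rw [VC_sup]; exact x.2)
    rw [Submodule.mem_torsion_iff]
    refine ⟨⟨m, mem_nonZeroDivisors_of_ne_zero hm⟩, ?_⟩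
    show m • Submodule.Quotient.mk (p := A ⊔ B) (x : Fin n → ℤ) = 0
    rw [← Submodule.Quotient.mk_smul]
    exact (Submodule.Quotient.mk_eq_zero _).mpr hmem
  set f : ↥S →+ ↥(Submodule.torsion ℤ ((Fin n → ℤ) ⧸ (A ⊔ B))) := AddMonoidHom.mk'
    (fun x => ⟨Submodule.Quotient.mk (x : Fin n → ℤ), htorsmem x⟩)
    (by
      intro a b
      apply Subtype.ext
      show Submodule.Quotient.mk ((a : Fin n → ℤ) + (b : Fin n → ℤ)) = _
      rw [Submodule.Quotient.mk_add]
      rfl) with hfdef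
  have hfapp : ∀ x : ↥S, (f x : (Fin n → ℤ) ⧸ (A ⊔ B)) =
      Submodule.Quotient.mk (x : Fin n → ℤ) := fun x => rfl
  have hfsurj : Function.Surjective f := by
    rintro ⟨q, hq⟩
    obtain ⟨x, rfl⟩ := Submodule.Quotient.mk_surjective (A ⊔ B) q
    obtain ⟨⟨m, hm0⟩, hm⟩ := (Submodule.mem_torsion_iff _).mp hq
    have hm' : Submodule.Quotient.mk (p := A ⊔ B) (m • x) = 0 := by
      rw [Submodule.Quotient.mk_smul]
      exact hm
    have hmem : m • x ∈ A ⊔ B := (Submodule.Quotient.mk_eq_zero _).mp hm'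
    have hmne : m ≠ 0 := mem_nonZeroDivisors_iff_ne_zero.mp hm0
    have hxS : x ∈ S := by
      rw [hmemS]
      have h1 : zc (m • x) ∈ VC A ⊔ VC B := by rw [← VC_sup]; exact zc_mem_VC hmem
      rw [zc_smul] at h1
      have h2 : ((m : ℂ))⁻¹ • ((m : ℂ) • zc x) ∈ VC A ⊔ VC B := Submodule.smul_mem _ _ h1
      rwa [inv_smul_smul₀ (by exact_mod_cast hmne)] at h2
    exact ⟨⟨x, hxS⟩, Subtype.ext rfl⟩
  have hkerf : f.ker = Φ.ker := by
    ext x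
    rw [AddMonoidHom.mem_ker, AddMonoidHom.mem_ker, hker x, Subtype.ext_iff, hfapp x]
    show Submodule.Quotient.mk (x : Fin n → ℤ) = 0 ↔ _
    rw [Submodule.Quotient.mk_eq_zero]
  have e1 := QuotientAddGroup.quotientKerEquivOfSurjective f hfsurj
  have e2 := QuotientAddGroup.quotientAddEquivOfEq hkerf
  have e3 := QuotientAddGroup.quotientKerEquivRange Φ
  have e4 := AddEquiv.addSubgroupCongr hrange
  have e5 : ↥(Subgroup.toAddSubgroup T) ≃+ Additive ↥T :=
    { toFun := fun x => Additive.ofMul (⟨Additive.toMul x.1, x.2⟩ : ↥T)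
      invFun := fun y => ⟨Additive.ofMul ((Additive.toMul y : ↥T) : Fin n → ℂˣ),
        (Additive.toMul y).2⟩
      left_inv := fun x => rfl
      right_inv := fun y => rfl
      map_add' := fun x y => rfl }
  exact ⟨AddEquiv.toMultiplicativeLeft ((((e1.symm.trans e2).trans e3).trans e4).trans e5)⟩
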